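/- Suppose f : ℝ^d → ℝ is differentiable, has L-Lipschitz continuous gradient, and satisfies the Polyak–Łojasiewicz inequality ‖∇f(x)‖₂² ≥ μ (f(x) − f(x*)) ≥ 0 for all x, with μ > 0. Then gradient descent x_{k+1} = x_k − η∇f(x_k) with step size η = 1/L satisfies f(x_k) − f(x*) ≤ (1 − μ/(2L))^k (f(x₀) − f(x*)), i.e., the suboptimality decays geometrically. -/

import Mathlib

open Real
open intervalIntegral InnerProductSpace

theorem descent {d : ℕ} (f : EuclideanSpace ℝ (Fin d) → ℝ)
    (hdiff : Differentiable ℝ f) (L : ℝ) (hL : 0 < L)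
    (hLip : ∀ x y, ‖gradient f x - gradient f y‖ ≤ L * ‖x - y‖)
    (x v : EuclideanSpace ℝ (Fin d)) :
    f (x + v) ≤ f x + ⟪gradient f x, v⟫_ℝ + L / 2 * ‖v‖ ^ 2 := by
  have hgcont : Continuous (gradient f) := by
    apply LipschitzWith.continuous (K := Real.toNNReal L)
    apply LipschitzWith.of_dist_le_mul
    intro a b
    simpa [dist_eq_norm, Real.coe_toNNReal L hL.le] using hLip a b
  set φ' : ℝ → ℝ := fun t => ⟪gradient f (x + t • v), v⟫_ℝ with hφ'
  have hderiv : ∀ t : ℝ, HasDerivAt (fun t : ℝ => f (x + t • v)) (φ' t) t := by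
    intro t
    have h1 : HasDerivAt (fun t : ℝ => x + t • v) v t := by
      simpa using ((hasDerivAt_id t).smul_const v).const_add x
    have h2 := ((hdiff (x + t • v)).hasGradientAt).hasFDerivAt
    have := h2.comp_hasDerivAt t h1
    simpa [hφ', real_inner_comm, Function.comp_def] using this
  have hcont : Continuous φ' := by
    apply Continuous.inner
    · exact hgcont.comp (by continuity)
    · exact continuous_const
  have hftc : ∫ t in (0:ℝ)..1, φ' t = f (x + v) - f x := by
    have := intervalIntegral.integral_eq_sub_of_hasDerivAt
      (f := fun t : ℝ => f (x + t • v)) (f' := φ')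
      (a := 0) (b := 1) (fun t _ => hderiv t)
      (hcont.intervalIntegrable 0 1)
    simpa using this
  have hbound : ∫ t in (0:ℝ)..1, φ' t ≤ ∫ t in (0:ℝ)..1, (φ' 0 + L * t * ‖v‖ ^ 2) := by
    apply intervalIntegral.integral_mono_on (by norm_num)
      (hcont.intervalIntegrable 0 1)
      ((Continuous.intervalIntegrable (by fun_prop) 0 1))
    intro t ht
    have : φ' t - φ' 0 ≤ L * t * ‖v‖ ^ 2 := by
      have h0 : φ' t - φ' 0 = ⟪gradient f (x + t • v) - gradient f x, v⟫_ℝ := by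
        simp [hφ', inner_sub_left]
      rw [h0]
      calc ⟪gradient f (x + t • v) - gradient f x, v⟫_ℝ
          ≤ ‖gradient f (x + t • v) - gradient f x‖ * ‖v‖ := real_inner_le_norm _ _
        _ ≤ (L * ‖(x + t • v) - x‖) * ‖v‖ := by
            apply mul_le_mul_of_nonneg_right (hLip _ _) (norm_nonneg _)
        _ = L * t * ‖v‖ ^ 2 := by
            simp [norm_smul, abs_of_nonneg ht.1]
            ring
    linarith
  have hc1 : Continuous (fun t : ℝ => L * t * ‖v‖ ^ 2) :=
    (continuous_const.mul continuous_id).mul continuous_const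
  have hint : ∫ t in (0:ℝ)..1, (φ' 0 + L * t * ‖v‖ ^ 2) = φ' 0 + L / 2 * ‖v‖ ^ 2 := by
    rw [intervalIntegral.integral_add (_root_.intervalIntegrable_const)
      (hc1.intervalIntegrable 0 1)]
    have : ∫ t in (0:ℝ)..1, L * t * ‖v‖ ^ 2 = L / 2 * ‖v‖ ^ 2 := by
      have : (fun t : ℝ => L * t * ‖v‖ ^ 2) = fun t : ℝ => (L * ‖v‖ ^ 2) * t := by
        funext t; ring
      rw [this, intervalIntegral.integral_const_mul, integral_id]
      ring
    rw [this]; simp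
  have : f (x + v) - f x ≤ φ' 0 + L / 2 * ‖v‖ ^ 2 := by
    rw [← hftc, ← hint]; exact hbound
  have h0 : φ' 0 = ⟪gradient f x, v⟫_ℝ := by simp [hφ']
  linarith [h0 ▸ this]


/-- If f is differentiable with L-Lipschitz gradient and satisfies the
PL inequality ‖∇f(x)‖² ≥ μ(f(x) − f(x*)) ≥ 0 with μ > 0, then gradient descent with
step size 1/L satisfies f(x_k) − f(x*) ≤ (1 − μ/(2L))^k (f(x₀) − f(x*)). -/
theorem stmt3 {d : ℕ} (f : EuclideanSpace ℝ (Fin d) → ℝ)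
    (hdiff : Differentiable ℝ f)
    (L : ℝ) (hL : 0 < L)
    (hLip : ∀ x y, ‖gradient f x - gradient f y‖ ≤ L * ‖x - y‖)
    (xstar : EuclideanSpace ℝ (Fin d)) (μ : ℝ) (hμ : 0 < μ)
    (hPL : ∀ x, μ * (f x - f xstar) ≤ ‖gradient f x‖ ^ 2 ∧ 0 ≤ f x - f xstar)
    (x : ℕ → EuclideanSpace ℝ (Fin d))
    (hGD : ∀ k, x (k + 1) = x k - (1 / L) • gradient f (x k)) :
    ∀ k, f (x k) - f xstar ≤ (1 - μ / (2 * L)) ^ k * (f (x 0) - f xstar) := by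
  have hstep : ∀ k, f (x (k + 1)) - f xstar ≤
      (1 - μ / (2 * L)) * (f (x k) - f xstar) := by
    intro k
    set g := gradient f (x k) with hg
    have hxk : x (k + 1) = x k + (-(1 / L)) • g := by
      rw [hGD k]; module
    have hdesc := descent f hdiff L hL hLip (x k) ((-(1 / L)) • g)
    rw [← hxk] at hdesc
    have hi1 : ⟪g, (-(1 / L)) • g⟫_ℝ = -(1 / L) * ‖g‖ ^ 2 := by
      rw [real_inner_smul_right, real_inner_self_eq_norm_sq]
    have hi2 : ‖(-(1 / L)) • g‖ ^ 2 = (1 / L) ^ 2 * ‖g‖ ^ 2 := by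
      rw [norm_smul]; simp [abs_of_pos hL]; ring
    have hkey : f (x (k + 1)) ≤ f (x k) - 1 / (2 * L) * ‖g‖ ^ 2 := by
      rw [hi1, hi2] at hdesc
      have : -(1 / L) * ‖g‖ ^ 2 + L / 2 * ((1 / L) ^ 2 * ‖g‖ ^ 2)
          = -(1 / (2 * L)) * ‖g‖ ^ 2 := by
        field_simp; ring
      nlinarith [hdesc]
    have hPLk := (hPL (x k)).1
    rw [← hg] at hPLk
    have h2L : (0:ℝ) < 1 / (2 * L) := by positivity
    have heq : 1 / (2 * L) * (μ * (f (x k) - f xstar))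
        = μ / (2 * L) * (f (x k) - f xstar) := by field_simp
    nlinarith [mul_le_mul_of_nonneg_left hPLk h2L.le]
  have hnn : ∀ k, 0 ≤ f (x k) - f xstar := fun k => (hPL (x k)).2
  set c := 1 - μ / (2 * L) with hc
  rcases le_or_gt 0 c with hpos | hneg
  · intro k
    induction k with
    | zero => simp
    | succ k ih =>
      calc f (x (k + 1)) - f xstar ≤ c * (f (x k) - f xstar) := hstep k
        _ ≤ c * (c ^ k * (f (x 0) - f xstar)) := by
            exact mul_le_mul_of_nonneg_left ih hpos
        _ = c ^ (k + 1) * (f (x 0) - f xstar) := by ring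
  · have h0 : f (x 0) - f xstar = 0 := by
      have h1 := hstep 0
      have := hnn 1
      have := hnn 0
      nlinarith
    have hz : ∀ k, f (x k) - f xstar = 0 := by
      intro k
      induction k with
      | zero => exact h0
      | succ k ih =>
        have := hstep k
        rw [ih] at this
        have := hnn (k + 1)
        linarith
    intro k
    rw [hz k, h0]
    simp
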